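/- Let 𝕂 be ℝ or ℂ, let m ≤ d, and let C be an order-k tensor over 𝕂 of format m×⋯×m that is symmetrically concise. Let X ∈ 𝕂^{d×m} be a matrix of rank m. Then { Y ∈ 𝕂^{d×m} : [[C; X, …, X]] = [[C; Y, …, Y]] } = { XZ : Z ∈ GL(m,𝕂), [[C; Z, …, Z]] = C }, i.e. the set of matrices with the same signature tensor as X is exactly X times the stabilizer of C under the congruence action. -/

import Mathlib

open Matrix

/-- The congruence action of a `d × m` matrix `X` on an order-`k` tensor `C`
of format `m × ⋯ × m`. -/
def congrAct {𝕂 : Type*} [CommRing 𝕂] (k m d : ℕ) (C : (Fin k → Fin m) → 𝕂)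
    (X : Matrix (Fin d) (Fin m) 𝕂) : (Fin k → Fin d) → 𝕂 :=
  fun β => ∑ α : Fin k → Fin m, C α * ∏ l, X (β l) (α l)

section Aux

variable {𝕂 : Type*} [CommRing 𝕂]

lemma congrAct_mul (k m m' d : ℕ) (C : (Fin k → Fin m) → 𝕂)
    (X : Matrix (Fin d) (Fin m') 𝕂) (Z : Matrix (Fin m') (Fin m) 𝕂) :
    congrAct k m d C (X * Z) = congrAct k m' d (congrAct k m m' C Z) X := by
  funext β
  simp only [congrAct, Matrix.mul_apply]
  simp only [Fintype.prod_sum]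
  simp only [Finset.mul_sum, Finset.sum_mul]
  rw [Finset.sum_comm]
  refine Finset.sum_congr rfl fun γ _ => Finset.sum_congr rfl fun α _ => ?_
  rw [Finset.prod_mul_distrib]
  ring

lemma congrAct_one (k m : ℕ) (C : (Fin k → Fin m) → 𝕂) :
    congrAct k m m C 1 = C := by
  funext β
  simp only [congrAct, Matrix.one_apply]
  rw [Finset.sum_eq_single β]
  · simp
  · intro α _ hαβ
    obtain ⟨l, hl⟩ : ∃ l, β l ≠ α l := by
      by_contra h
      push_neg at h
      exact hαβ (funext fun l => (h l).symm)
    rw [Finset.prod_eq_zero (Finset.mem_univ l) (show (if β l = α l then (1:𝕂) else 0) = 0 from if_neg hl), mul_zero]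
  · intro h
    exact absurd (Finset.mem_univ β) h

lemma congrAct_contract (k m d : ℕ) (C : (Fin k → Fin m) → 𝕂)
    (Y : Matrix (Fin d) (Fin m) 𝕂) (w : Fin d → 𝕂) (p : Fin k) (β : Fin k → Fin d) :
    ∑ j, w j * congrAct k m d C Y (Function.update β p j)
      = ∑ α : Fin k → Fin m,
          C α * ((∑ j, w j * Y j (α p)) * ∏ l ∈ Finset.univ.erase p, Y (β l) (α l)) := by
  simp only [congrAct, Finset.mul_sum]
  rw [Finset.sum_comm]
  refine Finset.sum_congr rfl fun α _ => ?_
  have hprod : ∀ j : Fin d, (∏ l, Y (Function.update β p j l) (α l))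
      = Y j (α p) * ∏ l ∈ Finset.univ.erase p, Y (β l) (α l) := by
    intro j
    have h1 : ∀ l, Y (Function.update β p j l) (α l)
        = Function.update (fun l => Y (β l) (α l)) p (Y j (α p)) l := by
      intro l
      rcases eq_or_ne l p with rfl | h
      · simp
      · simp [Function.update_of_ne h]
    calc ∏ l, Y (Function.update β p j l) (α l)
        = ∏ l, Function.update (fun l => Y (β l) (α l)) p (Y j (α p)) l :=
          Finset.prod_congr rfl fun l _ => h1 l
      _ = Y j (α p) * ∏ l ∈ Finset.univ.erase p, Y (β l) (α l) := by
          rw [Finset.prod_update_of_mem (Finset.mem_univ p), Finset.sdiff_singleton_eq_erase]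
  simp only [hprod]
  rw [Finset.sum_mul, Finset.mul_sum]
  exact Finset.sum_congr rfl fun j _ => by ring

lemma reconstruct {k m d : ℕ} (hd : 0 < d)
    (C : (Fin k → Fin m) → 𝕂) (X : Matrix (Fin d) (Fin m) 𝕂)
    (P : Matrix (Fin m) (Fin d) 𝕂) (hP : P * X = 1) (v : Fin m → 𝕂) (p : Fin k)
    (hF : ∀ β : Fin k → Fin d,
      ∑ α : Fin k → Fin m,
        C α * (v (α p) * ∏ l ∈ Finset.univ.erase p, X (β l) (α l)) = 0)
    (γ : Fin k → Fin m) :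
    ∑ i, v i * C (Function.update γ p i) = 0 := by
  classical
  set j₀ : Fin d := ⟨0, hd⟩ with hj₀
  set g : Fin k → Fin d → 𝕂 :=
    fun l j => if l = p then (if j = j₀ then 1 else 0) else P (γ l) j with hg
  have key : ∑ β : Fin k → Fin d,
      (∑ α : Fin k → Fin m,
        C α * (v (α p) * ∏ l ∈ Finset.univ.erase p, X (β l) (α l))) * ∏ l, g l (β l) = 0 :=
    Finset.sum_eq_zero fun β _ => by rw [hF β, zero_mul]
  have calc1 : ∑ β : Fin k → Fin d,
      (∑ α : Fin k → Fin m,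
        C α * (v (α p) * ∏ l ∈ Finset.univ.erase p, X (β l) (α l))) * ∏ l, g l (β l)
      = ∑ i, C (Function.update γ p i) * v i := by
    simp only [Finset.sum_mul]
    rw [Finset.sum_comm]
    have inner : ∀ α : Fin k → Fin m,
        (∑ β : Fin k → Fin d,
          (C α * (v (α p) * ∏ l ∈ Finset.univ.erase p, X (β l) (α l))) * ∏ l, g l (β l))
        = C α * v (α p) * ∏ l ∈ Finset.univ.erase p, (if γ l = α l then (1:𝕂) else 0) := by
      intro α
      have hcomb : ∀ β : Fin k → Fin d,
          (C α * (v (α p) * ∏ l ∈ Finset.univ.erase p, X (β l) (α l))) * ∏ l, g l (β l)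
            = C α * v (α p)
              * ∏ l, ((if l = p then (1:𝕂) else X (β l) (α l)) * g l (β l)) := by
        intro β
        rw [Finset.prod_mul_distrib]
        have h4 : (∏ l, (if l = p then (1:𝕂) else X (β l) (α l)))
            = ∏ l ∈ Finset.univ.erase p, X (β l) (α l) := by
          rw [← Finset.mul_prod_erase Finset.univ _ (Finset.mem_univ p), if_pos rfl, one_mul]
          exact Finset.prod_congr rfl fun l hl => if_neg (Finset.mem_erase.mp hl).1
        rw [h4]
        ring
      calc ∑ β : Fin k → Fin d,
            (C α * (v (α p) * ∏ l ∈ Finset.univ.erase p, X (β l) (α l))) * ∏ l, g l (β l)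
          = ∑ β : Fin k → Fin d,
              C α * v (α p) * ∏ l, ((if l = p then (1:𝕂) else X (β l) (α l)) * g l (β l)) :=
            Finset.sum_congr rfl fun β _ => hcomb β
        _ = C α * v (α p) * ∑ β : Fin k → Fin d,
              ∏ l, ((if l = p then (1:𝕂) else X (β l) (α l)) * g l (β l)) := by
            rw [Finset.mul_sum]
        _ = C α * v (α p) * ∏ l, ∑ j, ((if l = p then (1:𝕂) else X j (α l)) * g l j) := by
            rw [Fintype.prod_sum]
        _ = C α * v (α p) * ∏ l ∈ Finset.univ.erase p, (if γ l = α l then (1:𝕂) else 0) := by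
            congr 1
            rw [← Finset.mul_prod_erase Finset.univ _ (Finset.mem_univ p)]
            have h5 : (∑ j, ((if p = p then (1:𝕂) else X j (α p)) * g p j)) = 1 := by
              simp [hg, Finset.sum_ite_eq']
            rw [h5, one_mul]
            refine Finset.prod_congr rfl fun l hl => ?_
            have hlp : l ≠ p := (Finset.mem_erase.mp hl).1
            have h6 : ∀ j, ((if l = p then (1:𝕂) else X j (α l)) * g l j)
                = P (γ l) j * X j (α l) := by
              intro j
              simp only [hg, if_neg hlp]
              ring
            rw [Finset.sum_congr rfl fun j _ => h6 j]
            have h7 := congrFun (congrFun hP (γ l)) (α l)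
            rw [Matrix.mul_apply] at h7
            rw [h7, Matrix.one_apply]
    rw [Finset.sum_congr rfl fun α _ => inner α]
    simp only [Finset.prod_boole, mul_ite, mul_one, mul_zero]
    rw [← Finset.sum_filter]
    refine Finset.sum_nbij' (fun α => α p) (fun i => Function.update γ p i)
      (fun α _ => Finset.mem_univ _) ?_ ?_ ?_ ?_
    · intro i _
      refine Finset.mem_filter.mpr ⟨Finset.mem_univ _, fun l hl => ?_⟩
      exact (Function.update_of_ne (Finset.mem_erase.mp hl).1 i γ).symm
    · intro α hα
      funext l
      show Function.update γ p (α p) l = α l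
      rcases eq_or_ne l p with rfl | h
      · simp
      · rw [Function.update_of_ne h]
        exact (Finset.mem_filter.mp hα).2 l (Finset.mem_erase.mpr ⟨h, Finset.mem_univ _⟩)
    · intro i _
      simp
    · intro α hα
      have hupd : Function.update γ p (α p) = α := by
        funext l
        rcases eq_or_ne l p with rfl | h
        · simp
        · rw [Function.update_of_ne h]
          exact (Finset.mem_filter.mp hα).2 l (Finset.mem_erase.mpr ⟨h, Finset.mem_univ _⟩)
      show C α * v (α p) = C (Function.update γ p (α p)) * v (α p)
      rw [hupd]
  calc ∑ i, v i * C (Function.update γ p i)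
      = ∑ i, C (Function.update γ p i) * v i :=
        Finset.sum_congr rfl fun i _ => mul_comm _ _
    _ = 0 := by rw [← calc1]; exact key

lemma rowVecMul {a b c : ℕ} (M : Matrix (Fin a) (Fin b) 𝕂)
    (N : Matrix (Fin b) (Fin c) 𝕂) (i : Fin a) : (M i) ᵥ* N = (M * N) i := by
  funext j
  simp [Matrix.vecMul, Matrix.mul_apply, dotProduct]

end Aux

lemma exists_left_inverse {𝕂 : Type*} [Field 𝕂] {d m : ℕ} (X : Matrix (Fin d) (Fin m) 𝕂)
    (hX : X.rank = m) : ∃ P : Matrix (Fin m) (Fin d) 𝕂, P * X = 1 := by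
  have h2 : Module.finrank 𝕂 ↥(LinearMap.range X.mulVecLin) = m := hX
  have hker : LinearMap.ker X.mulVecLin = ⊥ := by
    have h1 := LinearMap.finrank_range_add_finrank_ker X.mulVecLin
    rw [Module.finrank_fin_fun] at h1
    rw [← Submodule.finrank_eq_zero (R := 𝕂)]
    omega
  obtain ⟨g, hg⟩ := LinearMap.exists_leftInverse_of_injective X.mulVecLin hker
  refine ⟨LinearMap.toMatrix' g, ?_⟩
  have h3 : LinearMap.toMatrix' (g.comp X.mulVecLin)
      = LinearMap.toMatrix' g * LinearMap.toMatrix' X.mulVecLin :=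
    LinearMap.toMatrix'_comp g X.mulVecLin
  rw [hg, LinearMap.toMatrix'_id, ← Matrix.toLin'_apply' X, LinearMap.toMatrix'_toLin'] at h3
  exact h3.symm

/-- For a symmetrically concise order-`k` tensor `C` of format `m × ⋯ × m` over
`𝕂 = ℝ` or `ℂ`, and a matrix `X ∈ 𝕂^{d×m}` of rank `m ≤ d`, the matrices `Y`
with the same signature tensor as `X` are exactly the products `XZ` where `Z`
ranges over the stabilizer of `C` under the congruence action. -/
theorem same_signature_iff_stabilizer {𝕂 : Type*} [RCLike 𝕂] (k m d : ℕ)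
    (hmd : m ≤ d) (C : (Fin k → Fin m) → 𝕂)
    (hconc : ∀ v : Fin m → 𝕂,
      (∀ (p : Fin k) (α : Fin k → Fin m),
        ∑ i, v i * C (Function.update α p i) = 0) → v = 0)
    (X : Matrix (Fin d) (Fin m) 𝕂) (hX : X.rank = m) :
    {Y : Matrix (Fin d) (Fin m) 𝕂 | congrAct k m d C Y = congrAct k m d C X}
      = (fun Z => X * Z) ''
          {Z : Matrix (Fin m) (Fin m) 𝕂 | IsUnit Z ∧ congrAct k m m C Z = C} := by
  rcases Nat.eq_zero_or_pos m with rfl | hm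
  · ext Y
    simp only [Set.mem_setOf_eq, Set.mem_image]
    constructor
    · intro _
      exact ⟨1, ⟨isUnit_one, congrAct_one k 0 C⟩, funext fun i => funext fun j => j.elim0⟩
    · rintro ⟨Z, _, rfl⟩
      have hXZ : X * Z = X := funext fun i => funext fun j => j.elim0
      rw [hXZ]
  · have hd : 0 < d := lt_of_lt_of_le hm hmd
    obtain ⟨P, hP⟩ := exists_left_inverse X hX
    ext Y
    simp only [Set.mem_setOf_eq, Set.mem_image]
    constructor
    · intro hY
      have step : ∀ (A B : Matrix (Fin d) (Fin m) 𝕂) (Pa : Matrix (Fin m) (Fin d) 𝕂),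
          Pa * A = 1 → congrAct k m d C A = congrAct k m d C B →
          ∀ w : Fin d → 𝕂, w ᵥ* B = 0 → w ᵥ* A = 0 := by
        intro A B Pa hPa hAB w hw
        apply hconc
        intro p γ
        refine reconstruct hd C A Pa hPa (w ᵥ* A) p (fun β => ?_) γ
        have h1 := congrAct_contract k m d C A w p β
        have h2 := congrAct_contract k m d C B w p β
        have hvA : ∀ i, (w ᵥ* A) i = ∑ j, w j * A j i := by
          intro i
          simp [Matrix.vecMul, dotProduct]
        simp only [hvA]
        rw [← h1, hAB, h2]
        refine Finset.sum_eq_zero fun α _ => ?_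
        have hzero : (∑ j, w j * B j (α p)) = 0 := by
          have hwα := congrFun hw (α p)
          simpa [Matrix.vecMul, dotProduct] using hwα
        rw [hzero, zero_mul, mul_zero]
      have key1 : ∀ w : Fin d → 𝕂, w ᵥ* Y = 0 → w ᵥ* X = 0 := step X Y P hP hY.symm
      have hkle : LinearMap.ker (Yᵀ).mulVecLin ≤ LinearMap.ker (Xᵀ).mulVecLin := by
        intro w hw
        rw [LinearMap.mem_ker, Matrix.mulVecLin_apply, Matrix.mulVec_transpose] at hw ⊢
        exact key1 w hw
      have hrY : Module.finrank 𝕂 ↥(LinearMap.range (Yᵀ).mulVecLin) = m := by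
        have h1 := LinearMap.finrank_range_add_finrank_ker (Xᵀ).mulVecLin
        have h2 := LinearMap.finrank_range_add_finrank_ker (Yᵀ).mulVecLin
        rw [Module.finrank_fin_fun] at h1 h2
        have h3 := Submodule.finrank_mono hkle
        have h4 : Module.finrank 𝕂 ↥(LinearMap.range (Xᵀ).mulVecLin) = m := by
          have h4' : Xᵀ.rank = m := by rw [Matrix.rank_transpose, hX]
          exact h4'
        have h5 : Module.finrank 𝕂 ↥(LinearMap.range (Yᵀ).mulVecLin) ≤ m := by
          have h5' : Yᵀ.rank ≤ m := by
            rw [Matrix.rank_transpose]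
            exact Matrix.rank_le_width Y
          exact h5'
        omega
      have hrankY : Y.rank = m := by
        rw [← Matrix.rank_transpose]
        exact hrY
      obtain ⟨Q, hQ⟩ := exists_left_inverse Y hrankY
      have key2 : ∀ w : Fin d → 𝕂, w ᵥ* X = 0 → w ᵥ* Y = 0 := step Y X Q hQ hY
      have hXPY : X * (P * Y) = Y := by
        have hz : (X * P - 1) * Y = 0 := by
          funext i
          rw [← rowVecMul]
          apply key2
          rw [rowVecMul]
          have hzx : (X * P - 1) * X = 0 := by
            rw [Matrix.sub_mul, Matrix.mul_assoc, hP, Matrix.mul_one, Matrix.one_mul, sub_self]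
          rw [hzx]
          rfl
        rw [Matrix.sub_mul, Matrix.one_mul, sub_eq_zero] at hz
        rw [← Matrix.mul_assoc]
        exact hz
      refine ⟨P * Y, ⟨?_, ?_⟩, hXPY⟩
      · have hQXZ : (Q * X) * (P * Y) = 1 := by
          rw [Matrix.mul_assoc, hXPY, hQ]
        exact ⟨⟨P * Y, Q * X, mul_eq_one_comm.mp hQXZ, hQXZ⟩, rfl⟩
      · have h5 : congrAct k m d (congrAct k m m C (P * Y)) X = congrAct k m d C X := by
          rw [← congrAct_mul, hXPY]
          exact hY
        have h6 := congrArg (fun T => congrAct k d m T P) h5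
        have h7 := ((congrAct_mul k m d m (congrAct k m m C (P * Y)) P X).trans h6).trans
          (congrAct_mul k m d m C P X).symm
        rw [hP, congrAct_one k m (congrAct k m m C (P * Y)), congrAct_one k m C] at h7
        exact h7
    · rintro ⟨Z, ⟨_, hZC⟩, rfl⟩
      rw [congrAct_mul, hZC]
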